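/- Given a finite set D of non-negative integers containing 0 and given m ≥ 1, there exists a finite ultrametric space FU(m, D) with all distances in D such that every D-ultrametric space X containing at most m points admits an isometric embedding into FU(m, D). -/

import Mathlib

/-- The distance of a metric space is an ultrametric. -/
def IsUltra (X : Type*) [MetricSpace X] : Prop :=
  ∀ x y z : X, dist x z ≤ max (dist x y) (dist y z)

/-- All distances of the metric space belong to the set `D` of natural numbers. -/
def DistIn (X : Type*) [MetricSpace X] (D : Finset ℕ) : Prop :=
  ∀ x y : X, ∃ a ∈ D, dist x y = (a : ℝ)


open Finset

noncomputable section FU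

variable (D : Finset ℕ) (m : ℕ)

/-- The universal space: functions from positive elements of `D` to `Fin m`. -/
def FU := {a : ℕ // a ∈ D.erase 0} → Fin m

variable {D m}

open Classical in
/-- Coordinates where two points differ. -/
def FUS (f g : FU D m) : Finset {a : ℕ // a ∈ D.erase 0} :=
  Finset.univ.filter (fun a => f a ≠ g a)

noncomputable def FUdist (f g : FU D m) : ℝ :=
  (((FUS f g).sup (fun a => a.1) : ℕ) : ℝ)

lemma FUS_comm (f g : FU D m) : FUS f g = FUS g f := by
  unfold FUS; ext a; simp [eq_comm]

lemma FUS_subset (f g h : FU D m) : FUS f h ⊆ FUS f g ∪ FUS g h := by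
  intro a ha
  simp only [FUS, mem_filter, mem_union, mem_univ, true_and] at *
  by_contra hc
  push_neg at hc
  exact ha (hc.1.trans hc.2)

lemma FUdist_nonneg (f g : FU D m) : 0 ≤ FUdist f g := Nat.cast_nonneg _

lemma FUdist_ultra (f g h : FU D m) :
    FUdist f h ≤ max (FUdist f g) (FUdist g h) := by
  unfold FUdist
  rw [← Nat.cast_max]
  exact_mod_cast le_trans (Finset.sup_mono (FUS_subset f g h))
    (le_of_eq (by rw [Finset.sup_union]))

noncomputable instance FUmetric : MetricSpace (FU D m) where
  dist := FUdist
  dist_self f := by simp [FUdist, FUS]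
  dist_comm f g := by show FUdist f g = FUdist g f; unfold FUdist; rw [FUS_comm]
  dist_triangle f g h := le_trans (FUdist_ultra f g h)
    (max_le (le_add_of_nonneg_right (FUdist_nonneg _ _)) (le_add_of_nonneg_left (FUdist_nonneg _ _)))
  eq_of_dist_eq_zero := by
    intro f g hd
    funext a
    by_contra hne
    have ha : a ∈ FUS f g := by simp [FUS, hne]
    have h1 : a.1 ≤ (FUS f g).sup (fun a => a.1) := Finset.le_sup ha
    have hd' : (((FUS f g).sup (fun a => a.1) : ℕ) : ℝ) = 0 := hd
    have : ((FUS f g).sup (fun a => a.1) : ℕ) = 0 := by exact_mod_cast hd'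
    have : a.1 = 0 := by omega
    exact (Finset.mem_erase.mp a.2).1 this

lemma FUdist_eq (f g : FU D m) : dist f g = FUdist f g := rfl

end FU

/-- Proposition 4.4: given a finite set `D` of non-negative integers containing `0` and given
`m ≥ 1`, there is a finite `D`-ultrametric space `FU(m, D)` such that every `D`-ultrametric
space with at most `m` points isometrically embeds into it. -/
theorem exists_finite_universal_ultrametric (D : Finset ℕ) (h0 : 0 ∈ D) (m : ℕ)
    (hm : 1 ≤ m) :
    ∃ (F : Type) (_ : MetricSpace F), Finite F ∧ IsUltra F ∧ DistIn F D ∧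
      ∀ (X : Type u) (_ : MetricSpace X), IsUltra X → DistIn X D →
        Finite X → Nat.card X ≤ m → ∃ f : X → F, Isometry f := by
  classical
  refine ⟨FU D m, inferInstance, ?_, ?_, ?_, ?_⟩
  · show Finite ({a : ℕ // a ∈ D.erase 0} → Fin m)
    infer_instance
  · intro f g h
    exact FUdist_ultra f g h
  · intro f g
    rcases (FUS f g).eq_empty_or_nonempty with h | h
    · exact ⟨0, h0, by rw [FUdist_eq]; unfold FUdist; rw [h]; simp⟩
    · obtain ⟨b, hb, hsup⟩ := Finset.exists_mem_eq_sup (FUS f g) h (fun a => a.1)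
      refine ⟨b.1, Finset.mem_of_mem_erase b.2, ?_⟩
      rw [FUdist_eq]; unfold FUdist; rw [hsup]
  · intro X _ hU hD _ hcard
    haveI := Fintype.ofFinite X
    have hc : Fintype.card X ≤ Fintype.card (Fin m) := by
      rw [Fintype.card_fin, ← Nat.card_eq_fintype_card]; exact hcard
    obtain ⟨g⟩ := Function.Embedding.nonempty_of_card_le hc
    set B : X → {a : ℕ // a ∈ D.erase 0} → Finset (Fin m) :=
      fun x a => (Finset.univ.filter (fun y => dist x y < (a.1 : ℝ))).image g with hB
    have hBne : ∀ x a, (B x a).Nonempty := by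
      intro x a
      refine ⟨g x, Finset.mem_image_of_mem g ?_⟩
      simp only [Finset.mem_filter, Finset.mem_univ, true_and, dist_self]
      exact_mod_cast Nat.pos_of_ne_zero (Finset.mem_erase.mp a.2).1
    set e : X → FU D m := fun x a => (B x a).min' (hBne x a) with he
    have min'_congr : ∀ (s t : Finset (Fin m)) (hs : s.Nonempty) (ht : t.Nonempty),
        s = t → s.min' hs = t.min' ht := by rintro s t hs ht rfl; rfl
    have key : ∀ x y a, e x a = e y a ↔ dist x y < (a.1 : ℝ) := by
      intro x y a
      constructor
      · intro h
        by_contra hlt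
        push_neg at hlt
        have hdisj : Disjoint (B x a) (B y a) := by
          simp only [hB]
          rw [Finset.disjoint_image g.injective, Finset.disjoint_left]
          intro z hz hz'
          simp only [Finset.mem_filter, Finset.mem_univ, true_and] at hz hz'
          have := hU x z y
          rw [dist_comm z y] at this
          have hlt2 : dist x y < (a.1 : ℝ) := lt_of_le_of_lt this (max_lt hz hz')
          linarith
        have h1 : e x a ∈ B x a := Finset.min'_mem _ _
        have h2 : e y a ∈ B y a := Finset.min'_mem _ _
        rw [← h] at h2
        exact Finset.disjoint_left.mp hdisj h1 h2
      · intro h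
        refine min'_congr _ _ _ _ ?_
        simp only [hB]
        congr 1
        ext z
        simp only [Finset.mem_filter, Finset.mem_univ, true_and]
        constructor
        · intro hz
          calc dist y z ≤ max (dist y x) (dist x z) := hU y x z
          _ < a.1 := max_lt (by rw [dist_comm]; exact h) hz
        · intro hz
          calc dist x z ≤ max (dist x y) (dist y z) := hU x y z
          _ < a.1 := max_lt h hz
    have hdist : ∀ x y : X, dist (e x) (e y) = dist x y := by
      intro x y
      obtain ⟨c, hcD, hcxy⟩ := hD x y
      rw [hcxy, FUdist_eq]
      unfold FUdist
      norm_cast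
      have hmem : ∀ a, a ∈ FUS (e x) (e y) ↔ a.1 ≤ c := by
        intro a
        simp only [FUS, Finset.mem_filter, Finset.mem_univ, true_and]
        rw [← not_iff_not, not_not, not_le, key, hcxy]
        exact_mod_cast Iff.rfl
      rcases Nat.eq_zero_or_pos c with hc0 | hcpos
      · subst hc0
        have : FUS (e x) (e y) = ∅ := by
          apply Finset.eq_empty_of_forall_notMem
          intro a ha
          have h1 := (hmem a).mp ha
          exact (Finset.mem_erase.mp a.2).1 (Nat.le_zero.mp h1)
        rw [this]; simp
      · have hcm : c ∈ D.erase 0 := Finset.mem_erase.mpr ⟨Nat.pos_iff_ne_zero.mp hcpos, hcD⟩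
        apply le_antisymm
        · exact Finset.sup_le fun a ha => (hmem a).mp ha
        · exact Finset.le_sup (f := fun a => a.1) ((hmem ⟨c, hcm⟩).mpr le_rfl)
    exact ⟨e, Isometry.of_dist_eq hdist⟩
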